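/- Let G be a compactly generated totally disconnected locally compact second countable group and let 𝒩 be a filtering family of closed normal subgroups of G with trivial intersection. Then some member N ∈ 𝒩 contains a compact normal subgroup K of N with N/K discrete (i.e., some member of 𝒩 is compact-by-discrete). -/

import Mathlib

open Set Topology

/-- Van Dantzig's theorem: a totally disconnected locally compact group has a
compact open subgroup. -/
theorem exists_compact_open_subgroup (G : Type*) [Group G] [TopologicalSpace G]
    [IsTopologicalGroup G] [LocallyCompactSpace G] [TotallyDisconnectedSpace G] :
    ∃ V : Subgroup G, IsCompact (V : Set G) ∧ IsOpen (V : Set G) := by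
  obtain ⟨K, hKc, hK1⟩ := exists_compact_mem_nhds (1 : G)
  obtain ⟨C, hCclopen, hC1, hCK⟩ :=
    (loc_compact_Haus_tot_disc_of_zero_dim).mem_nhds_iff.1 hK1
  have hCcomp : IsCompact C := hKc.of_isClosed_subset hCclopen.1 hCK
  obtain ⟨V, hV1, hCV⟩ :=
    compact_open_separated_mul_right hCcomp hCclopen.2 (le_refl C)
  -- symmetric neighborhood
  set W : Set G := V ∩ V⁻¹ with hW
  have hW1 : W ∈ 𝓝 (1 : G) := Filter.inter_mem hV1 (inv_mem_nhds_one G hV1)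
  have hWV : W ⊆ V := inter_subset_left
  have hWinvV : W⁻¹ ⊆ V := by
    intro x hx
    rw [Set.mem_inv] at hx
    have h2 := hx.2
    rwa [Set.mem_inv, inv_inv] at h2
  refine ⟨Subgroup.closure W, ?_, ?_⟩
  · -- compact: it is a closed subset of C
    have hsub : (Subgroup.closure W : Set G) ⊆ C := by
      intro x hx
      have hx' : x ∈ (Subgroup.closure W).toSubmonoid := hx
      rw [Subgroup.closure_toSubmonoid] at hx'
      obtain ⟨l, hl, hlprod⟩ := Submonoid.exists_list_of_mem_closure hx'
      have hlV : ∀ y ∈ l, y ∈ V := by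
        intro y hy
        rcases hl y hy with h | h
        · exact hWV h
        · exact hWinvV h
      have key : ∀ l' : List G, (∀ y ∈ l', y ∈ V) → ∀ c ∈ C, c * l'.prod ∈ C := by
        intro l'
        induction l' with
        | nil => intro _ c hc; simpa using hc
        | cons a l ih =>
          intro h c hc
          have hca : c * a ∈ C := hCV (Set.mul_mem_mul hc (h a (List.mem_cons_self (a := a) (l := l))))
          have := ih (fun y hy => h y (List.mem_cons_of_mem a hy)) (c * a) hca
          simpa [mul_assoc] using this
      have := key l hlV 1 hC1
      rwa [one_mul, hlprod] at this
    have hopen : IsOpen ((Subgroup.closure W : Subgroup G) : Set G) :=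
      Subgroup.isOpen_of_mem_nhds _ (Filter.mem_of_superset hW1 Subgroup.subset_closure)
    exact hCcomp.of_isClosed_subset ((Subgroup.closure W).isClosed_of_isOpen hopen) hsub
  · exact Subgroup.isOpen_of_mem_nhds _ (Filter.mem_of_superset hW1 Subgroup.subset_closure)

/-- A filtering family contains a lower bound for any finite subfamily. -/
theorem filtering_finset_lower_bound {G : Type*} [Group G] (𝒩 : Set (Subgroup G))
    (hne : 𝒩.Nonempty)
    (hfilter : ∀ N ∈ 𝒩, ∀ M ∈ 𝒩, ∃ K ∈ 𝒩, K ≤ N ⊓ M)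
    (u : Finset {N : Subgroup G // N ∈ 𝒩}) :
    ∃ N₀ ∈ 𝒩, ∀ M ∈ u, N₀ ≤ (M : {N : Subgroup G // N ∈ 𝒩}).val := by
  classical
  induction u using Finset.induction_on with
  | empty =>
    obtain ⟨N, hN⟩ := hne
    exact ⟨N, hN, fun M hM => absurd hM (Finset.notMem_empty M)⟩
  | insert _ _ ha ih =>
    rename_i a u
    obtain ⟨N₀, hN₀, hle⟩ := ih
    obtain ⟨K, hK, hKle⟩ := hfilter N₀ hN₀ a.val a.property
    refine ⟨K, hK, fun M hM => ?_⟩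
    rcases Finset.mem_insert.1 hM with rfl | hM
    · exact le_trans hKle inf_le_right
    · exact le_trans (le_trans hKle inf_le_left) (hle M hM)

/-- In a compactly generated t.d.l.c.s.c. group, a filtering family of closed normal
subgroups with trivial intersection contains a compact-by-discrete member. -/
theorem filtering_family_compact_by_discrete (G : Type*) [Group G] [TopologicalSpace G]
    [IsTopologicalGroup G] [LocallyCompactSpace G] [TotallyDisconnectedSpace G]
    [SecondCountableTopology G]
    (hcg : ∃ X : Set G, IsCompact X ∧ Subgroup.closure X = ⊤)
    (𝒩 : Set (Subgroup G)) (hne : 𝒩.Nonempty)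
    (hclosed : ∀ N ∈ 𝒩, IsClosed (N : Set G))
    (hnormal : ∀ N ∈ 𝒩, N.Normal)
    (hfilter : ∀ N ∈ 𝒩, ∀ M ∈ 𝒩, ∃ K ∈ 𝒩, K ≤ N ⊓ M)
    (htriv : ⋂ N ∈ 𝒩, (N : Set G) = {1}) :
    ∃ N ∈ 𝒩, ∃ K : Subgroup G, K ≤ N ∧ IsCompact (K : Set G) ∧
      (∀ n ∈ N, ∀ k ∈ K, n * k * n⁻¹ ∈ K) ∧
      -- the quotient N/K is discrete, i.e. K is relatively open in N
      (∃ O : Set G, IsOpen O ∧ (K : Set G) = O ∩ (N : Set G)) := by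
  classical
  obtain ⟨V, hVcomp, hVopen⟩ := exists_compact_open_subgroup G
  obtain ⟨X, hXcomp, hXgen⟩ := hcg
  -- cover X by finitely many left cosets of V
  have hcover : X ⊆ ⋃ g : G, (fun x => g⁻¹ * x) ⁻¹' (V : Set G) := by
    intro x _
    refine Set.mem_iUnion.2 ⟨x, ?_⟩
    simpa using V.one_mem
  obtain ⟨t, ht⟩ := hXcomp.elim_finite_subcover _
    (fun g => hVopen.preimage (by continuity : Continuous fun x => g⁻¹ * x)) hcover
  -- the open neighborhood W of 1
  set W : Set G := (V : Set G) ∩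
      ⋂ g ∈ t, ((fun x => g⁻¹ * x * g) ⁻¹' (V : Set G) ∩ (fun x => g * x * g⁻¹) ⁻¹' (V : Set G))
    with hWdef
  have hWopen : IsOpen W := by
    refine hVopen.inter (isOpen_biInter_finset fun g _ => IsOpen.inter ?_ ?_)
    · exact hVopen.preimage (by continuity)
    · exact hVopen.preimage (by continuity)
  have hW1 : (1 : G) ∈ W := by
    refine ⟨V.one_mem, Set.mem_iInter₂.2 fun g _ => ⟨?_, ?_⟩⟩
    · simp [V.one_mem]
    · simp [V.one_mem]
  -- find N₀ ∈ 𝒩 with N₀ ∩ V ⊆ W using compactness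
  have hVclosed : IsClosed (V : Set G) := V.isClosed_of_isOpen hVopen
  have hDcomp : IsCompact ((V : Set G) \ W) :=
    hVcomp.of_isClosed_subset (hVclosed.sdiff hWopen) diff_subset
  have hinter : ((V : Set G) \ W) ∩ ⋂ N : {N : Subgroup G // N ∈ 𝒩}, (N.val : Set G) = ∅ := by
    have : ⋂ N : {N : Subgroup G // N ∈ 𝒩}, (N.val : Set G) = ⋂ N ∈ 𝒩, (N : Set G) := by
      rw [Set.biInter_eq_iInter]
    rw [this, htriv]
    ext x
    simp only [Set.mem_inter_iff, Set.mem_diff, Set.mem_singleton_iff, Set.mem_empty_iff_false,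
      iff_false]
    rintro ⟨⟨_, hxW⟩, rfl⟩
    exact hxW hW1
  obtain ⟨u, hu⟩ := hDcomp.elim_finite_subfamily_closed
    (fun N : {N : Subgroup G // N ∈ 𝒩} => (N.val : Set G))
    (fun N => hclosed N.val N.property) hinter
  obtain ⟨N₀, hN₀mem, hN₀le⟩ := filtering_finset_lower_bound 𝒩 hne hfilter u
  -- N₀ ∩ V ⊆ W
  have hNVW : (N₀ : Set G) ∩ (V : Set G) ⊆ W := by
    intro x ⟨hxN, hxV⟩
    by_contra hxW
    have hxD : x ∈ (V : Set G) \ W := ⟨hxV, hxW⟩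
    have hxall : x ∈ ⋂ N ∈ u, ((N : {N : Subgroup G // N ∈ 𝒩}).val : Set G) :=
      Set.mem_iInter₂.2 fun N hN => hN₀le N hN hxN
    exact absurd hu (Set.nonempty_iff_ne_empty.1 ⟨x, hxD, hxall⟩)
  -- the compact subgroup K
  set K : Subgroup G := N₀ ⊓ V with hKdef
  have hKset : (K : Set G) = (N₀ : Set G) ∩ (V : Set G) := rfl
  have hKW : (K : Set G) ⊆ W := by rw [hKset]; exact hNVW
  haveI hN₀norm : N₀.Normal := hnormal N₀ hN₀mem
  -- the normalizer of K is all of G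
  have hVnorm : ∀ v ∈ V, ∀ k ∈ K, v * k * v⁻¹ ∈ K := by
    intro v hv k hk
    exact ⟨hN₀norm.conj_mem k hk.1 v, V.mul_mem (V.mul_mem hv hk.2) (V.inv_mem hv)⟩
  have htnorm : ∀ g ∈ t, ∀ k ∈ K, g * k * g⁻¹ ∈ K ∧ g⁻¹ * k * g ∈ K := by
    intro g hg k hk
    have hkW := hKW hk
    have h1 : g⁻¹ * k * g ∈ V := (Set.mem_iInter₂.1 hkW.2 g hg).1
    have h2 : g * k * g⁻¹ ∈ V := (Set.mem_iInter₂.1 hkW.2 g hg).2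
    exact ⟨⟨hN₀norm.conj_mem k hk.1 g, h2⟩,
      ⟨by simpa using hN₀norm.conj_mem k hk.1 g⁻¹, h1⟩⟩
  have hnormalizer : Subgroup.normalizer (K : Set G) = ⊤ := by
    rw [eq_top_iff, ← hXgen]
    have hsub : X ⊆ (Subgroup.closure ((V : Set G) ∪ (t : Set G)) : Set G) := by
      intro x hx
      obtain ⟨g, hgt, hgv⟩ := Set.mem_iUnion₂.1 (ht hx)
      have hgmem : g ∈ Subgroup.closure ((V : Set G) ∪ (t : Set G)) :=
        Subgroup.subset_closure (Or.inr hgt)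
      have hvmem : g⁻¹ * x ∈ Subgroup.closure ((V : Set G) ∪ (t : Set G)) :=
        Subgroup.subset_closure (Or.inl hgv)
      have := Subgroup.mul_mem _ hgmem hvmem
      simpa using this
    have hXle : Subgroup.closure X ≤ Subgroup.closure ((V : Set G) ∪ (t : Set G)) :=
      Subgroup.closure_le _ |>.2 hsub
    refine le_trans hXle ?_
    rw [Subgroup.closure_le]
    rintro g (hg | hg)
    · rw [SetLike.mem_coe, Subgroup.mem_normalizer_iff]
      intro h
      constructor
      · intro hh; exact hVnorm g hg h hh
      · intro hh
        have := hVnorm g⁻¹ (V.inv_mem hg) _ hh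
        simpa [mul_assoc] using this
    · rw [SetLike.mem_coe, Subgroup.mem_normalizer_iff]
      intro h
      constructor
      · intro hh; exact (htnorm g hg h hh).1
      · intro hh
        have := (htnorm g hg _ hh).2
        simpa [mul_assoc] using this
  -- conclude
  refine ⟨N₀, hN₀mem, K, inf_le_left, ?_, ?_, ⟨(V : Set G), hVopen, ?_⟩⟩
  · exact hVcomp.of_isClosed_subset ((hclosed N₀ hN₀mem).inter hVclosed)
      (by rw [hKset]; exact inter_subset_right)
  · intro n _ k hk
    have hn : n ∈ Subgroup.normalizer (K : Set G) := by rw [hnormalizer]; trivial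
    exact (Subgroup.mem_normalizer_iff.1 hn k).1 hk
  · rw [hKset, Set.inter_comm]
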